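/- For all integers i > j ≥ 0, the polynomial identity ℬ_{i−j}(t_1,…,t_{i−j}, j+1) = ((j+1)!/(i+1)!) · B_{i+1,j+1}(1, 2!t_1, 3!t_2, …, (i−j+1)! t_{i−j}) holds, where ℬ_k(t_1,…,t_k,t) = Σ_{l_1+2l_2+⋯+k l_k = k} (Π_{l=1−l_1−⋯−l_k}^{0} (t+l)) · t_1^{l_1}⋯t_k^{l_k} / (l_1!⋯l_k!) and B_{r,s} is the partial Bell polynomial. -/

import Mathlib

open Finset

/-- The partial Bell polynomial `B_{r,s}(x_1,…,x_l)`, `l = r−s+1`: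
`Σ_{k_1+⋯+k_l=s, k_1+2k_2+⋯+lk_l=r} (r!/(k_1!⋯k_l!)) (x_1/1!)^{k_1}⋯(x_l/l!)^{k_l}`. -/
noncomputable def partialBell (r s : ℕ) (x : ℕ → ℚ) : ℚ :=
  ∑ k ∈ (Fintype.piFinset fun _ : Fin (r - s + 1) => Finset.range (r + 1)) |>.filter
      (fun k => (∑ j, k j) = s ∧ (∑ j, (j.1 + 1) * k j) = r),
    ((r.factorial : ℚ) / ∏ j, ((k j).factorial : ℚ)) *
      ∏ j, (x (j.1 + 1) / ((j.1 + 1).factorial : ℚ)) ^ k j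

/-- `ℬ_k(x_1,…,x_k,t) = Σ_{l_1+2l_2+⋯+kl_k=k} (t(t−1)⋯(t−(l_1+⋯+l_k)+1)) ·
x_1^{l_1}⋯x_k^{l_k}/(l_1!⋯l_k!)`; `ℬ_0 = 1`. -/
noncomputable def calB (k : ℕ) (x : ℕ → ℚ) (t : ℚ) : ℚ :=
  ∑ l ∈ (Fintype.piFinset fun _ : Fin k => Finset.range (k + 1)) |>.filter
      (fun l => (∑ j, (j.1 + 1) * l j) = k),
    (∏ m ∈ Finset.range (∑ j, l j), (t - (m : ℚ))) *
      ∏ j, x (j.1 + 1) ^ l j / ((l j).factorial : ℚ)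

lemma partialBell_eq_of (r s n : ℕ) (h : r - s + 1 = n) (x : ℕ → ℚ) :
    partialBell r s x =
      ∑ k ∈ (Fintype.piFinset fun _ : Fin n => Finset.range (r + 1)) |>.filter
          (fun k => (∑ j, k j) = s ∧ (∑ j, (j.1 + 1) * k j) = r),
        ((r.factorial : ℚ) / ∏ j, ((k j).factorial : ℚ)) *
          ∏ j, (x (j.1 + 1) / ((j.1 + 1).factorial : ℚ)) ^ k j := by
  subst h; rfl

lemma sum_weight_succ (n : ℕ) (f : Fin (n + 1) → ℕ) :
    ∑ m : Fin (n + 1), (m.1 + 1) * f m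
      = f 0 + ((∑ m : Fin n, (m.1 + 1) * f m.succ) + ∑ m : Fin n, f m.succ) := by
  rw [Fin.sum_univ_succ, ← Finset.sum_add_distrib]
  simp only [Fin.val_zero, Fin.val_succ]
  congr 1
  · omega
  · apply Finset.sum_congr rfl
    intro m _
    ring

/-- For `i > j ≥ 0`:
`ℬ_{i−j}(x_1,…,x_{i−j}, j+1) = ((j+1)!/(i+1)!) · B_{i+1,j+1}(1, 2!x_1, …, (i−j+1)! x_{i−j})`,
where `x 0 = 1` encodes the value `t_0 = 1`. -/
theorem stmt9 (i j : ℕ) (hij : j < i) (x : ℕ → ℚ) (hx : x 0 = 1) :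
    calB (i - j) x ((j : ℚ) + 1) =
      (((j + 1).factorial : ℚ) / ((i + 1).factorial : ℚ)) *
        partialBell (i + 1) (j + 1) (fun m => (m.factorial : ℚ) * x (m - 1)) := by
  obtain ⟨k, hk1, rfl⟩ : ∃ k, 1 ≤ k ∧ i = j + k := ⟨i - j, by omega, by omega⟩
  rw [show j + k - j = k from by omega,
    partialBell_eq_of (j + k + 1) (j + 1) (k + 1) (by omega)]
  unfold calB
  rw [Finset.mul_sum]
  rw [← Finset.sum_filter_add_sum_filter_not _ (fun l : Fin k → ℕ => (∑ m, l m) ≤ j + 1)]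
  have hzero : ∑ l ∈ ((Fintype.piFinset fun _ : Fin k => Finset.range (k + 1)) |>.filter
      (fun l => (∑ m, (m.1 + 1) * l m) = k)).filter
      (fun l : Fin k → ℕ => ¬ (∑ m, l m) ≤ j + 1),
      (∏ m ∈ Finset.range (∑ m, l m), (((j : ℚ) + 1) - (m : ℚ))) *
        ∏ m, x (m.1 + 1) ^ l m / ((l m).factorial : ℚ) = 0 := by
    apply Finset.sum_eq_zero
    intro l hl
    rw [Finset.mem_filter] at hl
    have hjm : j + 1 ∈ Finset.range (∑ m, l m) := by
      rw [Finset.mem_range]; omega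
    rw [Finset.prod_eq_zero hjm (by push_cast; ring), zero_mul]
  rw [hzero, add_zero]
  refine Finset.sum_nbij'
    (fun l : Fin k → ℕ => (Fin.cons (j + 1 - ∑ m, l m) l : Fin (k + 1) → ℕ))
    (fun (c : Fin (k + 1) → ℕ) (m : Fin k) => c m.succ) ?_ ?_ ?_ ?_ ?_
  · -- hi : maps into the partialBell index set
    intro l hl
    simp only [Finset.mem_filter, Fintype.mem_piFinset, Finset.mem_range] at hl ⊢
    obtain ⟨⟨hmem, hw⟩, hs⟩ := hl
    refine ⟨?_, ?_, ?_⟩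
    · intro m
      refine Fin.cases ?_ ?_ m
      · rw [Fin.cons_zero]; omega
      · intro m'; rw [Fin.cons_succ]; have := hmem m'; omega
    · rw [Fin.sum_univ_succ]
      simp only [Fin.cons_zero, Fin.cons_succ]
      omega
    · rw [sum_weight_succ]
      simp only [Fin.cons_zero, Fin.cons_succ]
      omega
  · -- hj : maps back
    intro c hc
    simp only [Finset.mem_filter, Fintype.mem_piFinset, Finset.mem_range] at hc ⊢
    obtain ⟨hmem, hsum, hw⟩ := hc
    rw [Fin.sum_univ_succ] at hsum
    rw [sum_weight_succ] at hw
    refine ⟨⟨?_, by omega⟩, by omega⟩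
    intro m
    have h1 : (m.1 + 1) * c m.succ ≤ ∑ m : Fin k, (m.1 + 1) * c m.succ :=
      Finset.single_le_sum (f := fun m : Fin k => (m.1 + 1) * c m.succ)
        (fun a _ => Nat.zero_le _) (Finset.mem_univ m)
    have h2 : c m.succ ≤ (m.1 + 1) * c m.succ := Nat.le_mul_of_pos_left _ (by omega)
    omega
  · -- left_inv
    intro l hl
    funext m
    simp
  · -- right_inv
    intro c hc
    simp only [Finset.mem_filter, Fintype.mem_piFinset, Finset.mem_range] at hc
    obtain ⟨hmem, hsum, hw⟩ := hc
    rw [Fin.sum_univ_succ] at hsum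
    funext m
    refine Fin.cases ?_ ?_ m
    · simp only [Fin.cons_zero]; omega
    · intro m'; simp only [Fin.cons_succ]
  · -- value equality
    intro l hl
    simp only [Finset.mem_filter, Fintype.mem_piFinset, Finset.mem_range] at hl
    obtain ⟨⟨hmem, hw⟩, hs⟩ := hl
    set s := ∑ m, l m with hsdef
    have hdesc : ∏ m ∈ Finset.range s, (((j : ℚ) + 1) - (m : ℚ))
        = ((j + 1).factorial : ℚ) / ((j + 1 - s).factorial : ℚ) := by
      have h1 : ((j + 1 - s).factorial : ℚ) ≠ 0 :=
        Nat.cast_ne_zero.mpr (Nat.factorial_ne_zero _)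
      rw [eq_div_iff h1, mul_comm]
      have h2 : ∏ m ∈ Finset.range s, (((j : ℚ) + 1) - (m : ℚ))
          = (((j + 1).descFactorial s : ℕ) : ℚ) := by
        rw [Nat.descFactorial_eq_prod_range, Nat.cast_prod]
        apply Finset.prod_congr rfl
        intro m hm
        rw [Finset.mem_range] at hm
        have hmj : m ≤ j + 1 := by omega
        push_cast [Nat.cast_sub hmj]
        ring
      rw [h2, ← Nat.cast_mul, Nat.factorial_mul_descFactorial hs]
    rw [hdesc]
    rw [Fin.prod_univ_succ, Fin.prod_univ_succ]
    simp only [Fin.cons_zero, Fin.cons_succ, Fin.val_zero, Fin.val_succ]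
    have hx0 : ((Nat.factorial (0 + 1) : ℚ) * x (0 + 1 - 1) / ((Nat.factorial (0 + 1) : ℚ)))
        ^ (j + 1 - s) = 1 := by
      simp [hx]
    have hxstep : ∀ m : Fin k,
        ((Nat.factorial (m.1 + 1 + 1) : ℚ) * x (m.1 + 1 + 1 - 1)
          / ((Nat.factorial (m.1 + 1 + 1) : ℚ))) ^ l m = x (m.1 + 1) ^ l m := by
      intro m
      congr 1
      rw [show m.1 + 1 + 1 - 1 = m.1 + 1 from rfl]
      exact mul_div_cancel_left₀ _ (Nat.cast_ne_zero.mpr (Nat.factorial_ne_zero _))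
    simp only [hx0, hxstep, one_mul]
    have hlprod : ∀ m : Fin k, x (m.1 + 1) ^ l m / ((l m).factorial : ℚ)
        = x (m.1 + 1) ^ l m * (((l m).factorial : ℚ))⁻¹ := fun m => div_eq_mul_inv _ _
    rw [Finset.prod_congr rfl (fun m _ => hlprod m), Finset.prod_mul_distrib]
    have hne1 : ((j + 1).factorial : ℚ) ≠ 0 := Nat.cast_ne_zero.mpr (Nat.factorial_ne_zero _)
    have hne2 : ((j + 1 - s).factorial : ℚ) ≠ 0 := Nat.cast_ne_zero.mpr (Nat.factorial_ne_zero _)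
    have hne3 : ((j + k + 1 + 1).factorial : ℚ) ≠ 0 :=
      Nat.cast_ne_zero.mpr (Nat.factorial_ne_zero _)
    have hne4 : (∏ m : Fin k, ((l m).factorial : ℚ)) ≠ 0 :=
      Finset.prod_ne_zero_iff.mpr fun m _ => Nat.cast_ne_zero.mpr (Nat.factorial_ne_zero _)
    have hne5 : (∏ m : Fin k, (((l m).factorial : ℚ))⁻¹)
        = (∏ m : Fin k, ((l m).factorial : ℚ))⁻¹ := by
      rw [← Finset.prod_inv_distrib]
    rw [hne5]
    field_simp
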